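/- Let n ≥ 1 be an integer, let M̄ ≥ 1, let b₁, …, bₙ > 0 and e₁, …, eₙ > 0 be real numbers satisfying bᵢ > eⱼ for all i, j ∈ {1, …, n}, and let p_max > 0. Then the supremum of F(p, q) = Σᵢ₌₁ⁿ [ log₂(1 + M̄·bᵢ·pᵢ) + log₂(1 + eᵢ·qᵢ / (1 + eᵢ·pᵢ)) ] over all pᵢ ≥ 0, qᵢ ≥ 0 with Σᵢ (pᵢ + qᵢ) ≤ p_max equals the supremum of G(p) = Σᵢ₌₁ⁿ log₂(1 + M̄·bᵢ·pᵢ) over all pᵢ ≥ 0 with Σᵢ pᵢ ≤ p_max. -/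
import Mathlib


open Finset

private lemma noma_key (Mbar b e p q : ℝ) (hM : 1 ≤ Mbar) (hb : 0 < b)
    (he : 0 < e) (hbe : e < b) (hp : 0 ≤ p) (hq : 0 ≤ q) :
    Real.logb 2 (1 + Mbar * b * p) + Real.logb 2 (1 + e * q / (1 + e * p)) ≤
      Real.logb 2 (1 + Mbar * b * (p + q)) := by
  have hA : b ≤ Mbar * b := le_mul_of_one_le_left hb.le hM
  have hd : (0:ℝ) < 1 + e * p := by positivity
  have h1 : (0:ℝ) < 1 + Mbar * b * p := by positivity
  have h2 : (0:ℝ) < 1 + e * q / (1 + e * p) := by positivity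
  rw [← Real.logb_mul (ne_of_gt h1) (ne_of_gt h2)]
  apply Real.logb_le_logb_of_le one_lt_two (by positivity)
  have ht : e * q / (1 + e * p) * (1 + e * p) = e * q := div_mul_cancel₀ _ hd.ne'
  nlinarith [mul_nonneg hq (sub_nonneg.2 hbe.le), mul_nonneg (mul_nonneg hq hp) (sub_nonneg.2 hA),
    mul_nonneg hq (sub_nonneg.2 (hbe.le.trans hA)), div_nonneg (mul_nonneg he.le hq) hd.le,
    mul_nonneg (mul_nonneg hq hp) he.le]

/-- Consequence of Lemma 1: the supremum of the NOMA sum-rate upper bound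
`F(p,q)` over `{p ≥ 0, q ≥ 0, Σᵢ (pᵢ + qᵢ) ≤ p_max}` equals the supremum of
`G(p) = Σᵢ log₂(1 + M̄·bᵢ·pᵢ)` over `{p ≥ 0, Σᵢ pᵢ ≤ p_max}`. -/
theorem noma_sum_rate_sup_eq_center_only_sup
    (n : ℕ) (hn : 1 ≤ n) (Mbar : ℝ) (hM : 1 ≤ Mbar)
    (b e : Fin n → ℝ) (hb : ∀ i, 0 < b i) (he : ∀ i, 0 < e i)
    (hbe : ∀ i j, e j < b i) (pmax : ℝ) (hpmax : 0 < pmax) :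
    sSup {x : ℝ | ∃ p q : Fin n → ℝ, (∀ i, 0 ≤ p i) ∧ (∀ i, 0 ≤ q i) ∧
            (∑ i, (p i + q i)) ≤ pmax ∧
            x = ∑ i, (Real.logb 2 (1 + Mbar * b i * p i) +
                      Real.logb 2 (1 + e i * q i / (1 + e i * p i)))} =
    sSup {x : ℝ | ∃ p : Fin n → ℝ, (∀ i, 0 ≤ p i) ∧ (∑ i, p i) ≤ pmax ∧
            x = ∑ i, Real.logb 2 (1 + Mbar * b i * p i)} := by
  set S : Set ℝ := {x : ℝ | ∃ p q : Fin n → ℝ, (∀ i, 0 ≤ p i) ∧ (∀ i, 0 ≤ q i) ∧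
            (∑ i, (p i + q i)) ≤ pmax ∧
            x = ∑ i, (Real.logb 2 (1 + Mbar * b i * p i) +
                      Real.logb 2 (1 + e i * q i / (1 + e i * p i)))} with hS
  set T : Set ℝ := {x : ℝ | ∃ p : Fin n → ℝ, (∀ i, 0 ≤ p i) ∧ (∑ i, p i) ≤ pmax ∧
            x = ∑ i, Real.logb 2 (1 + Mbar * b i * p i)} with hT
  -- a uniform upper bound for T
  set B : ℝ := ∑ i, Real.logb 2 (1 + Mbar * b i * pmax) with hB
  have hTB : ∀ x ∈ T, x ≤ B := by
    rintro x ⟨p, hp, hsum, rfl⟩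
    apply Finset.sum_le_sum
    intro i _
    have hpi : p i ≤ pmax := le_trans (Finset.single_le_sum (fun j _ => hp j) (mem_univ i)) hsum
    have h1 : (0:ℝ) < 1 + Mbar * b i * p i := by nlinarith [mul_nonneg (mul_nonneg (zero_le_one.trans hM) (hb i).le) (hp i)]
    apply Real.logb_le_logb_of_le one_lt_two h1
    nlinarith [mul_nonneg (mul_nonneg (zero_le_one.trans hM) (hb i).le) (sub_nonneg.2 hpi)]
  have hTbdd : BddAbove T := ⟨B, hTB⟩
  have h0T : (0:ℝ) ∈ T := ⟨0, fun i => le_refl 0, by simp [hpmax.le], by simp⟩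
  -- every element of S is ≤ some element of T
  have hST : ∀ x ∈ S, ∃ y ∈ T, x ≤ y := by
    rintro x ⟨p, q, hp, hq, hsum, rfl⟩
    refine ⟨∑ i, Real.logb 2 (1 + Mbar * b i * (p i + q i)),
      ⟨fun i => p i + q i, fun i => add_nonneg (hp i) (hq i), hsum, rfl⟩, ?_⟩
    apply Finset.sum_le_sum
    intro i _
    exact noma_key Mbar (b i) (e i) (p i) (q i) hM (hb i) (he i) (hbe i i) (hp i) (hq i)
  have hSB : ∀ x ∈ S, x ≤ B := fun x hx => by
    obtain ⟨y, hyT, hxy⟩ := hST x hx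
    exact hxy.trans (hTB y hyT)
  have h0S : (0:ℝ) ∈ S := ⟨0, 0, fun i => le_refl 0, fun i => le_refl 0,
    by simp [hpmax.le], by simp⟩
  apply le_antisymm
  · apply Real.sSup_le
    · intro x hx
      obtain ⟨y, hyT, hxy⟩ := hST x hx
      exact hxy.trans (le_csSup hTbdd hyT)
    · exact le_csSup hTbdd h0T
  · apply Real.sSup_le
    · intro x hx
      obtain ⟨p, hp, hsum, rfl⟩ := hx
      refine le_csSup ⟨B, hSB⟩ ⟨p, 0, hp, fun i => le_refl 0, by simpa using hsum, ?_⟩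
      simp
    · exact le_csSup ⟨B, hSB⟩ h0S
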